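/- Let m ≥ 1 and let G be the complete bipartite graph K_{2,m} with unit edge weights, with bipartition parts {s, t} and M, |M| = m. Then G has at least 2^m distinct relevant cutsets; in particular, the number of relevant cutsets of a graph can grow exponentially in the number of its vertices. -/

import Mathlib

open Finset
open scoped Classical

variable {V : Type*}

/-- The edge boundary `∂S`: the set of edges of `G` with exactly one endpoint in `S`. -/
noncomputable def edgeBoundary [Fintype V] [DecidableEq V] (G : SimpleGraph V) (S : Finset V) :
    Finset (Sym2 V) :=
  Finset.univ.filter fun e => e ∈ G.edgeSet ∧ ∃ u v, e = s(u, v) ∧ u ∈ S ∧ v ∉ S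

/-- A cutset of `G` is an edge boundary `∂S` with `∅ ≠ S ≠ V`. -/
def IsCutset [Fintype V] [DecidableEq V] (G : SimpleGraph V) (D : Finset (Sym2 V)) : Prop :=
  ∃ S : Finset V, S ≠ ∅ ∧ S ≠ Finset.univ ∧ D = edgeBoundary G S

/-- Symmetric difference of a finite family of edge sets: the set of edges occurring in an
odd number of members of the family. -/
noncomputable def symmDiffFamily [Fintype V] [DecidableEq V] {ι : Type*} (s : Finset ι)
    (f : ι → Finset (Sym2 V)) : Finset (Sym2 V) :=
  Finset.univ.filter fun e => Odd ((s.filter fun i => e ∈ f i).card)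

/-- A cut basis: a family of `n - 1` cutsets such that every element of the cut space is the
symmetric difference of a subfamily, and no nonempty subfamily has empty symmetric
difference. -/
def IsCutBasis [Fintype V] [DecidableEq V] (G : SimpleGraph V)
    (𝒟 : Finset (Finset (Sym2 V))) : Prop :=
  𝒟.card = Fintype.card V - 1 ∧
  (∀ D ∈ 𝒟, IsCutset G D) ∧
  (∀ S : Finset V, ∃ ℬ ⊆ 𝒟, edgeBoundary G S = symmDiffFamily ℬ id) ∧
  (∀ ℬ ⊆ 𝒟, ℬ.Nonempty → symmDiffFamily ℬ id ≠ ∅)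

/-- The weight `|D|` of an edge set `D`. -/
def weight (w : Sym2 V → ℝ) (D : Finset (Sym2 V)) : ℝ :=
  ∑ e ∈ D, w e

/-- A minimum cut basis: a cut basis of minimum total weight. -/
def IsMinCutBasis [Fintype V] [DecidableEq V] (G : SimpleGraph V) (w : Sym2 V → ℝ)
    (𝒟 : Finset (Finset (Sym2 V))) : Prop :=
  IsCutBasis G 𝒟 ∧
  ∀ 𝒟' : Finset (Finset (Sym2 V)), IsCutBasis G 𝒟' →
    ∑ D ∈ 𝒟, weight w D ≤ ∑ D ∈ 𝒟', weight w D

/-- A cutset is relevant if it belongs to at least one minimum cut basis. -/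
def IsRelevant [Fintype V] [DecidableEq V] (G : SimpleGraph V) (w : Sym2 V → ℝ)
    (D : Finset (Sym2 V)) : Prop :=
  ∃ 𝒟 : Finset (Finset (Sym2 V)), IsMinCutBasis G w 𝒟 ∧ D ∈ 𝒟

/-- A `u,v`-cut: a cutset of the form `∂S` with `u ∈ S` and `v ∉ S`. -/
def IsUVCut [Fintype V] [DecidableEq V] (G : SimpleGraph V) (u v : V)
    (D : Finset (Sym2 V)) : Prop :=
  ∃ S : Finset V, u ∈ S ∧ v ∉ S ∧ D = edgeBoundary G S

/-- A minimum-weight `u,v`-cut. -/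
def IsMinUVCut [Fintype V] [DecidableEq V] (G : SimpleGraph V) (w : Sym2 V → ℝ) (u v : V)
    (D : Finset (Sym2 V)) : Prop :=
  IsUVCut G u v D ∧ ∀ D' : Finset (Sym2 V), IsUVCut G u v D' → weight w D ≤ weight w D'

/-- A minimum `u,v`-cut with respect to unit weights (cardinality). -/
def IsMinUVCutCard [Fintype V] [DecidableEq V] (G : SimpleGraph V) (u v : V)
    (D : Finset (Sym2 V)) : Prop :=
  IsUVCut G u v D ∧ ∀ D' : Finset (Sym2 V), IsUVCut G u v D' → D.card ≤ D'.card

lemma eb_mem_edgeSet [Fintype V] [DecidableEq V] {G : SimpleGraph V} {S : Finset V}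
    {e : Sym2 V} (h : e ∈ edgeBoundary G S) : e ∈ G.edgeSet := by
  simp only [edgeBoundary, mem_filter] at h; exact h.2.1

lemma mem_eb_of_adj [Fintype V] [DecidableEq V] {G : SimpleGraph V} {S : Finset V}
    {u v : V} (h : G.Adj u v) :
    s(u, v) ∈ edgeBoundary G S ↔ ¬((u ∈ S) ↔ (v ∈ S)) := by
  simp only [edgeBoundary, mem_filter, mem_univ, true_and, SimpleGraph.mem_edgeSet]
  constructor
  · rintro ⟨-, a, b, hab, ha, hb⟩
    rw [Sym2.eq_iff] at hab
    rcases hab with ⟨rfl, rfl⟩ | ⟨rfl, rfl⟩ <;> tauto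
  · intro hx
    refine ⟨h, ?_⟩
    by_cases hu : u ∈ S
    · exact ⟨u, v, rfl, hu, by tauto⟩
    · exact ⟨v, u, Sym2.eq_swap.symm, by tauto, hu⟩


lemma zmod2_cast_eq (n : ℕ) : ((n : ZMod 2)) = if Odd n then 1 else 0 := by
  rw [← ZMod.natCast_mod n 2]
  rcases Nat.mod_two_eq_zero_or_one n with h | h <;> simp [h, Nat.odd_iff]

lemma mem_sdf [Fintype V] [DecidableEq V] {e : Sym2 V} {ι : Type*} {s : Finset ι}
    {f : ι → Finset (Sym2 V)} :
    e ∈ symmDiffFamily s f ↔ Odd ((s.filter fun i => e ∈ f i).card) := by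
  simp [symmDiffFamily]

lemma card_inter_cast [DecidableEq V] (P X : Finset (Sym2 V)) :
    ((X ∩ P).card : ZMod 2) = ∑ e ∈ P, if e ∈ X then (1 : ZMod 2) else 0 := by
  have h1 : X ∩ P = P.filter (· ∈ X) := by ext a; simp [Finset.mem_inter, and_comm]
  rw [h1, Finset.card_filter, Nat.cast_sum]
  exact Finset.sum_congr rfl fun e _ => by split <;> simp

lemma chi2_sdf [Fintype V] [DecidableEq V] (P : Finset (Sym2 V))
    (ℬ : Finset (Finset (Sym2 V))) :
    (((symmDiffFamily ℬ id) ∩ P).card : ZMod 2) = ∑ D ∈ ℬ, ((D ∩ P).card : ZMod 2) := by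
  rw [card_inter_cast]
  have h2 : ∀ e : Sym2 V, (if e ∈ symmDiffFamily ℬ id then (1 : ZMod 2) else 0)
      = ∑ D ∈ ℬ, if e ∈ D then (1 : ZMod 2) else 0 := by
    intro e
    have := (mem_sdf (s := ℬ) (f := id) (e := e))
    simp only [id] at this
    have hr : (∑ D ∈ ℬ, if e ∈ D then (1:ZMod 2) else 0)
        = (((ℬ.filter (fun D => e ∈ D)).card : ℕ) : ZMod 2) := by
      rw [Finset.card_filter, Nat.cast_sum]
      exact Finset.sum_congr rfl fun D _ => by split <;> simp
    rw [hr, zmod2_cast_eq]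
    by_cases h : e ∈ symmDiffFamily ℬ id
    · rw [if_pos h, if_pos (this.mp h)]
    · rw [if_neg h, if_neg (fun hc => h (this.mpr hc))]
  simp only [h2]
  rw [Finset.sum_comm]
  exact Finset.sum_congr rfl fun D _ => (card_inter_cast P D).symm

lemma sdf_singleton [Fintype V] [DecidableEq V] (D : Finset (Sym2 V)) :
    symmDiffFamily {D} id = D := by
  ext e
  rw [mem_sdf]
  by_cases h : e ∈ D <;> simp [Finset.filter_singleton, h]


namespace K2m
variable {m : ℕ}

abbrev Vm (m : ℕ) := Fin 2 ⊕ Fin m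
abbrev Gm (m : ℕ) : SimpleGraph (Vm m) := completeBipartiteGraph (Fin 2) (Fin m)

lemma adj_ij (i : Fin 2) (j : Fin m) : (Gm m).Adj (Sum.inl i) (Sum.inr j) := by
  simp [completeBipartiteGraph]

lemma edge_form {e : Sym2 (Vm m)} (h : e ∈ (Gm m).edgeSet) :
    ∃ i j, e = s(Sum.inl i, Sum.inr j) := by
  induction e using Sym2.ind with
  | _ x y =>
    rw [SimpleGraph.mem_edgeSet] at h
    rcases x with i | j <;> rcases y with i' | j'
    · simp [completeBipartiteGraph] at h
    · exact ⟨i, j', rfl⟩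
    · exact ⟨i', j, Sym2.eq_swap⟩
    · simp [completeBipartiteGraph] at h

lemma pair_eq_iff {i i' : Fin 2} {j j' : Fin m} :
    s(Sum.inl i, Sum.inr j) = (s(Sum.inl i', Sum.inr j') : Sym2 (Vm m)) ↔ i = i' ∧ j = j' := by
  rw [Sym2.eq_iff]; simp

lemma mem_eb_ij {S : Finset (Vm m)} {i : Fin 2} {j : Fin m} :
    s(Sum.inl i, Sum.inr j) ∈ edgeBoundary (Gm m) S ↔
      ¬((Sum.inl i ∈ S) ↔ (Sum.inr j ∈ S)) :=
  mem_eb_of_adj (adj_ij i j)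

/-- count of boundary edges at level `i` -/
noncomputable def cnt (S : Finset (Vm m)) (i : Fin 2) : ℕ :=
  (univ.filter fun j : Fin m => ¬((Sum.inl i ∈ S) ↔ (Sum.inr j ∈ S))).card

lemma eb_eq_biUnion (S : Finset (Vm m)) :
    edgeBoundary (Gm m) S = univ.biUnion (fun i : Fin 2 =>
      (univ.filter fun j : Fin m => ¬((Sum.inl i ∈ S) ↔ (Sum.inr j ∈ S))).image
        fun j => s(Sum.inl i, Sum.inr j)) := by
  ext e
  simp only [Finset.mem_biUnion, Finset.mem_image, Finset.mem_filter, mem_univ, true_and]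
  constructor
  · intro he
    obtain ⟨i, j, rfl⟩ := edge_form (eb_mem_edgeSet he)
    exact ⟨i, j, mem_eb_ij.mp he, rfl⟩
  · rintro ⟨i, j, hj, rfl⟩
    exact mem_eb_ij.mpr hj

lemma card_eb (S : Finset (Vm m)) :
    (edgeBoundary (Gm m) S).card = cnt S 0 + cnt S 1 := by
  rw [eb_eq_biUnion, Finset.card_biUnion]
  · rw [Fin.sum_univ_two]
    congr 1 <;> exact Finset.card_image_of_injective _ (fun a b hab => (pair_eq_iff.mp hab).2)
  · intro a _ b _ hab
    simp only [Finset.disjoint_left, Finset.mem_image]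
    rintro e ⟨j, _, rfl⟩ ⟨j', _, he⟩
    exact hab (pair_eq_iff.mp he).1.symm


lemma fin2_cases (i : Fin 2) : i = 0 ∨ i = 1 := by omega

lemma cnt_eq (S : Finset (Vm m)) (i : Fin 2) :
    cnt S i = if Sum.inl i ∈ S then (univ.filter fun j : Fin m => Sum.inr j ∉ S).card
      else (univ.filter fun j : Fin m => Sum.inr j ∈ S).card := by
  unfold cnt
  split <;> rename_i hb <;> exact congrArg Finset.card (Finset.filter_congr fun j _ => by tauto)

lemma card_eb_sep {S : Finset (Vm m)} (h : ¬((Sum.inl 0 ∈ S) ↔ (Sum.inl 1 ∈ S))) :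
    (edgeBoundary (Gm m) S).card = m := by
  rw [card_eb, cnt_eq, cnt_eq]
  have key : (univ.filter fun j : Fin m => Sum.inr j ∈ S).card
      + (univ.filter fun j : Fin m => Sum.inr j ∉ S).card = m := by
    rw [Finset.card_filter_add_card_filter_not]
    simp
  by_cases h0 : Sum.inl 0 ∈ S <;> by_cases h1 : Sum.inl 1 ∈ S <;> simp [h0, h1] at h ⊢ <;> omega

lemma two_le_card_eb {S : Finset (Vm m)} (h : (Sum.inl 0 ∈ S) ↔ (Sum.inl 1 ∈ S))
    (hne : S ≠ ∅) (hnu : S ≠ univ) : 2 ≤ (edgeBoundary (Gm m) S).card := by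
  rw [card_eb, cnt_eq, cnt_eq]
  by_cases h0 : Sum.inl 0 ∈ S
  · have h1 : Sum.inl 1 ∈ S := h.mp h0
    have : ∃ j : Fin m, Sum.inr j ∉ S := by
      by_contra hc
      push_neg at hc
      apply hnu
      apply Finset.eq_univ_iff_forall.mpr
      rintro (i | j)
      · rcases fin2_cases i with rfl | rfl
        · exact h0
        · exact h1
      · exact hc j
    obtain ⟨j, hj⟩ := this
    have hcard : 1 ≤ (univ.filter fun j : Fin m => Sum.inr j ∉ S).card :=
      Finset.card_pos.mpr ⟨j, by simp [hj]⟩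
    simp only [h0, h1, if_true]
    omega
  · have h1 : Sum.inl 1 ∉ S := fun hc => h0 (h.mpr hc)
    have : ∃ j : Fin m, Sum.inr j ∈ S := by
      by_contra hc
      push_neg at hc
      apply hne
      apply Finset.eq_empty_iff_forall_notMem.mpr
      rintro (i | j)
      · rcases fin2_cases i with rfl | rfl
        · exact h0
        · exact h1
      · exact hc j
    obtain ⟨j, hj⟩ := this
    have hcard : 1 ≤ (univ.filter fun j : Fin m => Sum.inr j ∈ S).card :=
      Finset.card_pos.mpr ⟨j, by simp [hj]⟩
    simp only [h0, h1, if_false]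
    omega


variable (m) in
/-- Probe edge pair at `j0 = 0`: used to define the parity invariant. -/
noncomputable def P (hm : 1 ≤ m) : Finset (Sym2 (Vm m)) :=
  {s(Sum.inl 0, Sum.inr (⟨0, hm⟩ : Fin m)), s(Sum.inl 1, Sum.inr (⟨0, hm⟩ : Fin m))}

lemma chi_eb (hm : 1 ≤ m) (S : Finset (Vm m)) :
    (((edgeBoundary (Gm m) S ∩ P m hm).card : ZMod 2))
      = if (Sum.inl 0 ∈ S) ↔ (Sum.inl 1 ∈ S) then 0 else 1 := by
  set j0 : Fin m := ⟨0, hm⟩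
  have hinter : edgeBoundary (Gm m) S ∩ P m hm
      = (P m hm).filter (· ∈ edgeBoundary (Gm m) S) := by
    ext a; simp [Finset.mem_inter, and_comm]
  have hne : s(Sum.inl 0, Sum.inr j0) ≠ (s(Sum.inl 1, Sum.inr j0) : Sym2 (Vm m)) := by
    intro hc
    exact absurd (pair_eq_iff.mp hc).1 (by decide)
  rw [hinter]
  unfold P
  rw [show (⟨0, hm⟩ : Fin m) = j0 from rfl]
  rw [Finset.filter_insert, Finset.filter_singleton]
  by_cases h0 : Sum.inl 0 ∈ S <;> by_cases h1 : Sum.inl 1 ∈ S <;>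
    by_cases hq : Sum.inr j0 ∈ S <;>
    simp [mem_eb_ij, h0, h1, hq, hne, Finset.card_insert_of_notMem] <;> decide


variable (m) in
noncomputable def SA (A : Finset (Fin m)) : Finset (Vm m) :=
  insert (Sum.inl 0) (A.image Sum.inr)

variable (m) in
noncomputable def DA (A : Finset (Fin m)) : Finset (Sym2 (Vm m)) :=
  edgeBoundary (Gm m) (SA m A)

variable (m) in
noncomputable def star (j : Fin m) : Finset (Sym2 (Vm m)) :=
  edgeBoundary (Gm m) {Sum.inr j}

lemma mem_SA_inl0 {A : Finset (Fin m)} : Sum.inl 0 ∈ SA m A := by simp [SA]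
lemma not_mem_SA_inl1 {A : Finset (Fin m)} : Sum.inl 1 ∉ SA m A := by simp [SA]
lemma mem_SA_inr {A : Finset (Fin m)} {j : Fin m} : Sum.inr j ∈ SA m A ↔ j ∈ A := by
  simp [SA]

lemma mem_DA0 {A : Finset (Fin m)} {j : Fin m} :
    s(Sum.inl 0, Sum.inr j) ∈ DA m A ↔ j ∉ A := by
  rw [DA, mem_eb_ij]
  simp [mem_SA_inl0, mem_SA_inr]

lemma mem_DA1 {A : Finset (Fin m)} {j : Fin m} :
    s(Sum.inl 1, Sum.inr j) ∈ DA m A ↔ j ∈ A := by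
  rw [DA, mem_eb_ij]
  simp [not_mem_SA_inl1, mem_SA_inr]

lemma mem_star {i : Fin 2} {j j' : Fin m} :
    s(Sum.inl i, Sum.inr j') ∈ star m j ↔ j' = j := by
  rw [star, mem_eb_ij]
  simp

lemma card_DA (A : Finset (Fin m)) : (DA m A).card = m := by
  rw [DA]
  apply card_eb_sep
  simp [mem_SA_inl0, not_mem_SA_inl1]

lemma card_star (j : Fin m) : (star m j).card = 2 := by
  rw [star, card_eb, cnt_eq, cnt_eq]
  have h0 : (Sum.inl 0 : Vm m) ∉ ({Sum.inr j} : Finset (Vm m)) := by simp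
  have h1 : (Sum.inl 1 : Vm m) ∉ ({Sum.inr j} : Finset (Vm m)) := by simp
  rw [if_neg h0, if_neg h1]
  have : (univ.filter fun j' : Fin m => Sum.inr j' ∈ ({Sum.inr j} : Finset (Vm m))) = {j} := by
    ext j'; simp
  rw [this]
  simp

lemma chi_DA (hm : 1 ≤ m) (A : Finset (Fin m)) :
    (((DA m A ∩ P m hm).card : ZMod 2)) = 1 := by
  rw [DA, chi_eb]
  rw [if_neg]
  simp [mem_SA_inl0, not_mem_SA_inl1]

lemma chi_star (hm : 1 ≤ m) (j : Fin m) :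
    (((star m j ∩ P m hm).card : ZMod 2)) = 0 := by
  rw [star, chi_eb]
  rw [if_pos]
  simp

lemma star_ne_DA {A : Finset (Fin m)} {j : Fin m} : star m j ≠ DA m A := by
  intro hc
  by_cases hj : j ∈ A
  · have h1 : s(Sum.inl 0, Sum.inr j) ∈ star m j := mem_star.mpr rfl
    rw [hc, mem_DA0] at h1
    exact h1 hj
  · have h1 : s(Sum.inl 1, Sum.inr j) ∈ star m j := mem_star.mpr rfl
    rw [hc, mem_DA1] at h1
    exact hj h1

lemma star_inj : Function.Injective (star m) := by
  intro a b hab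
  have : s(Sum.inl 0, Sum.inr a) ∈ star m b := by rw [← hab]; exact mem_star.mpr rfl
  exact mem_star.mp this

lemma DA_inj : Function.Injective (DA m) := by
  intro a b hab
  ext j
  constructor
  · intro hj
    exact mem_DA1.mp (hab ▸ mem_DA1.mpr hj)
  · intro hj
    exact mem_DA1.mp (hab ▸ mem_DA1.mpr hj)

lemma DA_not_mem_edgeSet {A : Finset (Fin m)} {e : Sym2 (Vm m)}
    (h : e ∉ (Gm m).edgeSet) : e ∉ DA m A := fun hc => h (eb_mem_edgeSet hc)

lemma star_not_mem_edgeSet {j : Fin m} {e : Sym2 (Vm m)}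
    (h : e ∉ (Gm m).edgeSet) : e ∉ star m j := fun hc => h (eb_mem_edgeSet hc)


lemma span_core (A : Finset (Fin m)) (T : Finset (Finset (Sym2 (Vm m)))) (B : Finset (Fin m))
    (hT : T ⊆ {DA m A}) (S : Finset (Vm m))
    (h : ∀ (i : Fin 2) (j : Fin m),
      ((Sum.inl i ∈ S) ↔ (Sum.inr j ∈ S)) ↔
        ((DA m A ∈ T ∧ s(Sum.inl i, Sum.inr j) ∈ DA m A) ↔ j ∈ B)) :
    edgeBoundary (Gm m) S = symmDiffFamily (T ∪ B.image (star m)) id := by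
  ext e
  rw [mem_sdf]
  simp only [id]
  by_cases he : e ∈ (Gm m).edgeSet
  · obtain ⟨i, j, rfl⟩ := edge_form he
    rw [mem_eb_ij]
    have hdisj : Disjoint T (B.image (star m)) := by
      rw [Finset.disjoint_left]
      intro D hD hD2
      obtain ⟨j', _, rfl⟩ := Finset.mem_image.mp hD2
      have h3 := hT hD
      rw [Finset.mem_singleton] at h3
      exact star_ne_DA h3
    rw [Finset.filter_union,
      Finset.card_union_of_disjoint (Finset.disjoint_filter_filter hdisj)]
    have hTcard : ((T.filter fun D => s(Sum.inl i, Sum.inr j) ∈ D).card)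
        = if DA m A ∈ T ∧ s(Sum.inl i, Sum.inr j) ∈ DA m A then 1 else 0 := by
      rcases Finset.subset_singleton_iff.mp hT with rfl | rfl
      · simp
      · rw [Finset.filter_singleton]
        by_cases hin : s(Sum.inl i, Sum.inr j) ∈ DA m A <;> simp [hin]
    have hfilt : ((B.image (star m)).filter fun D => s(Sum.inl i, Sum.inr j) ∈ D)
        = (B.filter fun j' => j = j').image (star m) := by
      rw [Finset.filter_image]
      congr 1
      exact Finset.filter_congr fun j' _ => by rw [mem_star, eq_comm]
    have hScard : (((B.image (star m)).filter fun D => s(Sum.inl i, Sum.inr j) ∈ D).card)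
        = if j ∈ B then 1 else 0 := by
      rw [hfilt, Finset.card_image_of_injective _ star_inj]
      rw [show (B.filter fun j' => j = j') = (B.filter fun j' => j' = j) from
        Finset.filter_congr fun j' _ => by rw [eq_comm], Finset.filter_eq']
      split <;> simp
    rw [hTcard, hScard, h i j]
    by_cases hp : DA m A ∈ T ∧ s(Sum.inl i, Sum.inr j) ∈ DA m A <;>
      by_cases hq : j ∈ B <;> simp [hp, hq] <;> decide
  · have hL : e ∉ edgeBoundary (Gm m) S := fun hc => he (eb_mem_edgeSet hc)
    have hfilt : (T ∪ B.image (star m)).filter (fun D => e ∈ D) = ∅ := by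
      rw [Finset.filter_eq_empty_iff]
      intro D hD
      rcases Finset.mem_union.mp hD with hD | hD
      · have h3 := hT hD
        rw [Finset.mem_singleton] at h3
        subst h3
        exact DA_not_mem_edgeSet he
      · obtain ⟨j', _, rfl⟩ := Finset.mem_image.mp hD
        exact star_not_mem_edgeSet he
    simp [hL, hfilt]


variable (m) in
noncomputable def Basis2 (A : Finset (Fin m)) : Finset (Finset (Sym2 (Vm m))) :=
  insert (DA m A) (univ.image (star m))

lemma DA_not_mem_stars {A : Finset (Fin m)} : DA m A ∉ univ.image (star m) := by
  intro hc
  obtain ⟨j, _, hj⟩ := Finset.mem_image.mp hc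
  exact star_ne_DA hj

lemma card_Basis2 (A : Finset (Fin m)) : (Basis2 m A).card = m + 1 := by
  rw [Basis2, Finset.card_insert_of_notMem DA_not_mem_stars,
    Finset.card_image_of_injective _ star_inj, Finset.card_univ]
  simp [add_comm]

lemma cutset_DA (A : Finset (Fin m)) : IsCutset (Gm m) (DA m A) := by
  refine ⟨SA m A, Finset.ne_empty_of_mem mem_SA_inl0, ?_, rfl⟩
  intro h
  exact not_mem_SA_inl1 (by rw [h]; exact Finset.mem_univ _)

lemma cutset_star (j : Fin m) : IsCutset (Gm m) (star m j) := by
  refine ⟨{Sum.inr j}, by simp, ?_, rfl⟩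
  intro h
  have : (Sum.inl 0 : Vm m) ∈ ({Sum.inr j} : Finset (Vm m)) := h ▸ Finset.mem_univ _
  simp at this

lemma spanning_Basis2 (A : Finset (Fin m)) (S : Finset (Vm m)) :
    ∃ ℬ ⊆ Basis2 m A, edgeBoundary (Gm m) S = symmDiffFamily ℬ id := by
  have hsubT : ∀ T : Finset (Finset (Sym2 (Vm m))), T ⊆ {DA m A} →
      ∀ B : Finset (Fin m), T ∪ B.image (star m) ⊆ Basis2 m A := by
    intro T hT B
    apply Finset.union_subset
    · exact hT.trans (by simp [Basis2])
    · exact (Finset.image_subset_image (Finset.subset_univ _)).trans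
        (Finset.subset_insert _ _)
  by_cases hc : (Sum.inl 0 ∈ S) ↔ (Sum.inl 1 ∈ S)
  · by_cases h0 : Sum.inl 0 ∈ S
    · have h1 : Sum.inl 1 ∈ S := hc.mp h0
      refine ⟨∅ ∪ (univ.filter fun j : Fin m => Sum.inr j ∉ S).image (star m),
        hsubT _ (by simp) _, span_core A ∅ _ (by simp) S ?_⟩
      intro i j
      rcases fin2_cases i with rfl | rfl <;>
        simp only [Finset.notMem_empty, false_and, Finset.mem_filter, Finset.mem_univ,
          true_and, h0, h1] <;> tauto
    · have h1 : Sum.inl 1 ∉ S := fun h => h0 (hc.mpr h)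
      refine ⟨∅ ∪ (univ.filter fun j : Fin m => Sum.inr j ∈ S).image (star m),
        hsubT _ (by simp) _, span_core A ∅ _ (by simp) S ?_⟩
      intro i j
      rcases fin2_cases i with rfl | rfl <;>
        simp only [Finset.notMem_empty, false_and, Finset.mem_filter, Finset.mem_univ,
          true_and, h0, h1] <;> tauto
  · by_cases h0 : Sum.inl 0 ∈ S
    · have h1 : Sum.inl 1 ∉ S := fun h => hc ⟨fun _ => h, fun _ => h0⟩
      refine ⟨{DA m A} ∪ (symmDiff A (univ.filter fun j : Fin m => Sum.inr j ∈ S)).image (star m),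
        hsubT _ (by simp) _, span_core A {DA m A} _ (by simp) S ?_⟩
      intro i j
      rcases fin2_cases i with rfl | rfl <;>
        simp only [Finset.mem_singleton_self, true_and, mem_DA0, mem_DA1,
          Finset.mem_symmDiff, Finset.mem_filter, Finset.mem_univ, true_and, h0, h1] <;>
        tauto
    · have h1 : Sum.inl 1 ∈ S := by
        by_contra h1
        exact hc ⟨fun h => absurd h h0, fun h => absurd h h1⟩
      refine ⟨{DA m A} ∪ (symmDiff A (univ.filter fun j : Fin m => Sum.inr j ∉ S)).image (star m),
        hsubT _ (by simp) _, span_core A {DA m A} _ (by simp) S ?_⟩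
      intro i j
      rcases fin2_cases i with rfl | rfl <;>
        simp only [Finset.mem_singleton_self, true_and, mem_DA0, mem_DA1,
          Finset.mem_symmDiff, Finset.mem_filter, Finset.mem_univ, true_and, h0, h1] <;>
        tauto


lemma indep_Basis2 (hm : 1 ≤ m) (A : Finset (Fin m)) :
    ∀ ℬ ⊆ Basis2 m A, ℬ.Nonempty → symmDiffFamily ℬ id ≠ ∅ := by
  intro ℬ hsub hne hempty
  by_cases hDA : DA m A ∈ ℬ
  · have hchi := chi2_sdf (P m hm) ℬ
    rw [hempty] at hchi
    have hL : (((∅ : Finset (Sym2 (Vm m))) ∩ P m hm).card : ZMod 2) = 0 := by simp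
    have hR : ∑ D ∈ ℬ, ((D ∩ P m hm).card : ZMod 2) = 1 := by
      rw [← Finset.add_sum_erase _ _ hDA, chi_DA hm]
      have hz : ∀ D ∈ ℬ.erase (DA m A), ((D ∩ P m hm).card : ZMod 2) = 0 := by
        intro D hD
        have hD1 := Finset.mem_of_mem_erase hD
        have hDne := Finset.ne_of_mem_erase hD
        rcases Finset.mem_insert.mp (hsub hD1) with rfl | hD2
        · exact absurd rfl hDne
        · obtain ⟨j, _, rfl⟩ := Finset.mem_image.mp hD2
          exact chi_star hm j
      rw [Finset.sum_eq_zero hz, add_zero]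
    rw [hL, hR] at hchi
    exact absurd hchi (by decide)
  · obtain ⟨D, hD⟩ := hne
    rcases Finset.mem_insert.mp (hsub hD) with rfl | hD2
    · exact hDA hD
    obtain ⟨j, _, rfl⟩ := Finset.mem_image.mp hD2
    have hmem : s(Sum.inl 0, Sum.inr j) ∈ symmDiffFamily ℬ id := by
      rw [mem_sdf]
      have hone : (ℬ.filter fun D => s(Sum.inl 0, Sum.inr j) ∈ id D) = {star m j} := by
        ext D'
        simp only [Finset.mem_filter, Finset.mem_singleton, id]
        constructor
        · rintro ⟨hD', hmem⟩
          rcases Finset.mem_insert.mp (hsub hD') with rfl | hD'2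
          · exact absurd hD' hDA
          · obtain ⟨j', _, rfl⟩ := Finset.mem_image.mp hD'2
            rw [mem_star] at hmem
            rw [hmem]
        · rintro rfl
          exact ⟨hD, mem_star.mpr rfl⟩
      rw [hone]
      simp
    rw [hempty] at hmem
    simp at hmem

lemma cutbasis_Basis2 (hm : 1 ≤ m) (A : Finset (Fin m)) :
    IsCutBasis (Gm m) (Basis2 m A) := by
  refine ⟨?_, ?_, spanning_Basis2 A, indep_Basis2 hm A⟩
  · rw [card_Basis2]
    simp [Vm]
    omega
  · intro D hD
    rcases Finset.mem_insert.mp hD with rfl | hD2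
    · exact cutset_DA A
    · obtain ⟨j, _, rfl⟩ := Finset.mem_image.mp hD2
      exact cutset_star j

lemma cutset_classify (hm : 1 ≤ m) {D : Finset (Sym2 (Vm m))} (h : IsCutset (Gm m) D) :
    (((D ∩ P m hm).card : ZMod 2) = 1 ∧ D.card = m) ∨
    (((D ∩ P m hm).card : ZMod 2) = 0 ∧ 2 ≤ D.card) := by
  obtain ⟨S, hne, hnu, rfl⟩ := h
  by_cases hc : (Sum.inl 0 ∈ S) ↔ (Sum.inl 1 ∈ S)
  · right
    exact ⟨by rw [chi_eb, if_pos hc], two_le_card_eb hc hne hnu⟩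
  · left
    exact ⟨by rw [chi_eb, if_neg hc], card_eb_sep hc⟩

lemma weight_one (D : Finset (Sym2 (Vm m))) : weight (fun _ => (1:ℝ)) D = (D.card : ℝ) := by
  simp [weight]

lemma basis_weight_Basis2 (A : Finset (Fin m)) :
    ∑ D ∈ Basis2 m A, weight (fun _ => (1:ℝ)) D = 3 * m := by
  rw [Basis2, Finset.sum_insert DA_not_mem_stars,
    Finset.sum_image (fun a _ b _ h => star_inj h)]
  simp only [weight_one, card_DA, card_star]
  rw [Finset.sum_const, Finset.card_univ]
  simp
  push_cast
  ring

lemma basis_weight_lb (hm2 : 2 ≤ m) (𝒟' : Finset (Finset (Sym2 (Vm m))))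
    (hb : IsCutBasis (Gm m) 𝒟') :
    (3 * m : ℝ) ≤ ∑ D ∈ 𝒟', weight (fun _ => (1:ℝ)) D := by
  have hm : 1 ≤ m := le_trans (by norm_num) hm2
  obtain ⟨hcard, hcut, hspan, hind⟩ := hb
  have hcardV : Fintype.card (Vm m) = m + 2 := by simp [Vm, add_comm]
  obtain ⟨ℬ, hsub, heq⟩ := hspan {Sum.inl 0}
  have hchiS : (((edgeBoundary (Gm m) {Sum.inl 0} ∩ P m hm).card : ZMod 2)) = 1 := by
    rw [chi_eb, if_neg]
    simp
  have hex : ∃ D1 ∈ ℬ, ((D1 ∩ P m hm).card : ZMod 2) = 1 := by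
    by_contra hcon
    push_neg at hcon
    have h0 : ∑ D ∈ ℬ, ((D ∩ P m hm).card : ZMod 2) = 0 := by
      apply Finset.sum_eq_zero
      intro D hD
      have h01 : ∀ x : ZMod 2, x ≠ 1 → x = 0 := by decide
      exact h01 _ (hcon D hD)
    rw [heq, chi2_sdf, h0] at hchiS
    exact absurd hchiS (by decide)
  obtain ⟨D1, hD1B, hD1chi⟩ := hex
  have hD1 : D1 ∈ 𝒟' := hsub hD1B
  have hD1card : D1.card = m := by
    rcases cutset_classify hm (hcut D1 hD1) with ⟨_, h⟩ | ⟨h0, _⟩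
    · exact h
    · rw [hD1chi] at h0
      exact absurd h0 (by decide)
  have hweight : ∀ D ∈ 𝒟', weight (fun _ => (1:ℝ)) D = (D.card : ℝ) := fun D _ => weight_one D
  rw [Finset.sum_congr rfl hweight]
  rw [← Finset.add_sum_erase _ _ hD1]
  have herase : ∀ D ∈ 𝒟'.erase D1, (2:ℝ) ≤ (D.card : ℝ) := by
    intro D hD
    have hDc := hcut D (Finset.mem_of_mem_erase hD)
    rcases cutset_classify hm hDc with ⟨_, h⟩ | ⟨_, h⟩
    · rw [h]; exact_mod_cast hm2
    · exact_mod_cast h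
  have hsum2 := Finset.card_nsmul_le_sum (𝒟'.erase D1) (fun D => (D.card : ℝ)) 2 herase
  have hec : (𝒟'.erase D1).card = m := by
    rw [Finset.card_erase_of_mem hD1, hcard, hcardV]
    omega
  rw [hec] at hsum2
  rw [hD1card]
  have : ((m:ℝ)) + 2 * m ≤ (m:ℝ) + ∑ D ∈ 𝒟'.erase D1, (D.card : ℝ) := by
    have h2 : (m • (2:ℝ)) = 2 * m := by
      simp [nsmul_eq_mul]
      ring
    linarith [hsum2, h2 ▸ hsum2]
  linarith

lemma min_basis_Basis2 (hm2 : 2 ≤ m) (A : Finset (Fin m)) :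
    IsMinCutBasis (Gm m) (fun _ => (1:ℝ)) (Basis2 m A) := by
  refine ⟨cutbasis_Basis2 (le_trans (by norm_num) hm2) A, fun 𝒟' h' => ?_⟩
  rw [basis_weight_Basis2]
  exact basis_weight_lb hm2 𝒟' h'


-- the m = 1 case
lemma DA1_ne : DA 1 ∅ ≠ DA 1 univ := by
  intro h
  have h2 := DA_inj h
  have : (0 : Fin 1) ∈ (univ : Finset (Fin 1)) := Finset.mem_univ _
  rw [← h2] at this
  simp at this

lemma spanning_Basis1 (S : Finset (Vm 1)) :
    ∃ ℬ ⊆ {DA 1 ∅, DA 1 univ}, edgeBoundary (Gm 1) S = symmDiffFamily ℬ id := by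
  refine ⟨(if (Sum.inl 0 ∈ S ↔ Sum.inr (0:Fin 1) ∈ S) then ∅ else {DA 1 ∅})
    ∪ (if (Sum.inl 1 ∈ S ↔ Sum.inr (0:Fin 1) ∈ S) then ∅ else {DA 1 univ}), ?_, ?_⟩
  · apply Finset.union_subset
    · split
      · simp
      · intro x hx
        rw [Finset.mem_singleton] at hx
        subst hx
        exact Finset.mem_insert_self _ _
    · split
      · simp
      · intro x hx
        rw [Finset.mem_singleton] at hx
        subst hx
        exact Finset.mem_insert_of_mem (Finset.mem_singleton_self _)
  · ext e
    rw [mem_sdf]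
    simp only [id]
    by_cases he : e ∈ (Gm 1).edgeSet
    · obtain ⟨i, j, rfl⟩ := edge_form he
      have hj : j = 0 := Subsingleton.elim _ _
      subst hj
      rw [mem_eb_ij]
      have hmem0 : ∀ i : Fin 2, (s(Sum.inl i, Sum.inr (0:Fin 1)) ∈ DA 1 ∅ ↔ i = 0) := by
        intro i
        rcases fin2_cases i with rfl | rfl
        · simp [mem_DA0]
        · simp [mem_DA1]
      have hmem1 : ∀ i : Fin 2, (s(Sum.inl i, Sum.inr (0:Fin 1)) ∈ DA 1 univ ↔ i = 1) := by
        intro i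
        rcases fin2_cases i with rfl | rfl
        · simp [mem_DA0]
        · simp [mem_DA1]
      rw [Finset.filter_union]
      rcases fin2_cases i with rfl | rfl <;>
        by_cases hc0 : (Sum.inl 0 ∈ S ↔ Sum.inr (0:Fin 1) ∈ S) <;>
        by_cases hc1 : (Sum.inl 1 ∈ S ↔ Sum.inr (0:Fin 1) ∈ S) <;>
        simp only [hc0, hc1, if_true, if_false, Finset.filter_empty, Finset.filter_singleton,
          hmem0, hmem1, Finset.empty_union, Finset.union_empty] <;>
        simp_all [Finset.filter_singleton, Nat.odd_iff] <;> tauto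
    · have hL : e ∉ edgeBoundary (Gm 1) S := fun hc => he (eb_mem_edgeSet hc)
      have hfilt : ∀ D ∈ ((if (Sum.inl 0 ∈ S ↔ Sum.inr (0:Fin 1) ∈ S) then
            (∅ : Finset (Finset (Sym2 (Vm 1)))) else {DA 1 ∅})
          ∪ (if (Sum.inl 1 ∈ S ↔ Sum.inr (0:Fin 1) ∈ S) then ∅ else {DA 1 univ})), e ∉ D := by
        intro D hD
        rcases Finset.mem_union.mp hD with hD | hD <;> revert hD <;> split <;>
          simp only [Finset.notMem_empty, Finset.mem_singleton, false_implies] <;>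
          rintro rfl <;> exact DA_not_mem_edgeSet he
      rw [Finset.filter_eq_empty_iff.mpr (fun D hD => hfilt D hD)]
      simp [hL]

lemma cutbasis_Basis1 : IsCutBasis (Gm 1) {DA 1 ∅, DA 1 univ} := by
  refine ⟨?_, ?_, spanning_Basis1, ?_⟩
  · rw [Finset.card_insert_of_notMem (Finset.notMem_singleton.mpr DA1_ne), Finset.card_singleton]
    simp [Vm]
  · intro D hD
    rcases Finset.mem_insert.mp hD with rfl | hD
    · exact cutset_DA _
    · rw [Finset.mem_singleton] at hD
      subst hD
      exact cutset_DA _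
  · intro ℬ hsub hne hempty
    have e0 : s(Sum.inl 0, Sum.inr (0:Fin 1)) ∈ DA 1 ∅ := mem_DA0.mpr (by simp)
    have e0' : s(Sum.inl 0, Sum.inr (0:Fin 1)) ∉ DA 1 univ := by rw [mem_DA0]; simp
    have e1 : s(Sum.inl 1, Sum.inr (0:Fin 1)) ∈ DA 1 univ := mem_DA1.mpr (by simp)
    have e1' : s(Sum.inl 1, Sum.inr (0:Fin 1)) ∉ DA 1 ∅ := by rw [mem_DA1]; simp
    by_cases h0 : DA 1 ∅ ∈ ℬ
    · have hmem : s(Sum.inl 0, Sum.inr (0:Fin 1)) ∈ symmDiffFamily ℬ id := by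
        rw [mem_sdf]
        have hf : (ℬ.filter fun D => s(Sum.inl 0, Sum.inr (0:Fin 1)) ∈ id D) = {DA 1 ∅} := by
          ext D
          simp only [Finset.mem_filter, Finset.mem_singleton, id]
          constructor
          · rintro ⟨hD, hmemD⟩
            rcases Finset.mem_insert.mp (hsub hD) with rfl | hD2
            · rfl
            · rw [Finset.mem_singleton] at hD2
              subst hD2
              exact absurd hmemD e0'
          · rintro rfl
            exact ⟨h0, e0⟩
        rw [hf]
        simp
      rw [hempty] at hmem
      simp at hmem
    · obtain ⟨D, hD⟩ := hne
      have hDu : D = DA 1 univ := by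
        rcases Finset.mem_insert.mp (hsub hD) with rfl | hD2
        · exact absurd hD h0
        · exact Finset.mem_singleton.mp hD2
      subst hDu
      have hmem : s(Sum.inl 1, Sum.inr (0:Fin 1)) ∈ symmDiffFamily ℬ id := by
        rw [mem_sdf]
        have hf : (ℬ.filter fun D => s(Sum.inl 1, Sum.inr (0:Fin 1)) ∈ id D) = {DA 1 univ} := by
          ext D
          simp only [Finset.mem_filter, Finset.mem_singleton, id]
          constructor
          · rintro ⟨hD', hmemD⟩
            rcases Finset.mem_insert.mp (hsub hD') with rfl | hD2
            · exact absurd hmemD e1'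
            · exact Finset.mem_singleton.mp hD2
          · rintro rfl
            exact ⟨hD, e1⟩
        rw [hf]
        simp
      rw [hempty] at hmem
      simp at hmem


lemma basis_weight_lb1 (𝒟' : Finset (Finset (Sym2 (Vm 1))))
    (hb : IsCutBasis (Gm 1) 𝒟') :
    (2:ℝ) ≤ ∑ D ∈ 𝒟', weight (fun _ => (1:ℝ)) D := by
  obtain ⟨hcard, hcut, hspan, hind⟩ := hb
  have hc2 : 𝒟'.card = 2 := by
    rw [hcard]
    simp [Vm]
  have hge1 : ∀ D ∈ 𝒟', (1:ℝ) ≤ weight (fun _ => (1:ℝ)) D := by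
    intro D hD
    have hne : D ≠ ∅ := by
      have := hind {D} (Finset.singleton_subset_iff.mpr hD) ⟨D, Finset.mem_singleton_self D⟩
      rwa [sdf_singleton] at this
    have : 1 ≤ D.card := Finset.card_pos.mpr (Finset.nonempty_iff_ne_empty.mpr hne)
    rw [weight_one]
    exact_mod_cast this
  have := Finset.card_nsmul_le_sum 𝒟' (fun D => weight (fun _ => (1:ℝ)) D) 1 hge1
  rw [hc2] at this
  simpa using this

lemma min_basis_Basis1 : IsMinCutBasis (Gm 1) (fun _ => (1:ℝ)) {DA 1 ∅, DA 1 univ} := by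
  refine ⟨cutbasis_Basis1, fun 𝒟' h' => ?_⟩
  have hw : ∑ D ∈ ({DA 1 ∅, DA 1 univ} : Finset (Finset (Sym2 (Vm 1)))),
      weight (fun _ => (1:ℝ)) D = 2 := by
    rw [Finset.sum_insert (Finset.notMem_singleton.mpr DA1_ne), Finset.sum_singleton,
      weight_one, weight_one, card_DA, card_DA]
    norm_num
  rw [hw]
  exact basis_weight_lb1 𝒟' h'

lemma relevant_DA (hm : 1 ≤ m) (A : Finset (Fin m)) :
    IsRelevant (Gm m) (fun _ => (1:ℝ)) (DA m A) := by
  rcases Nat.lt_or_ge m 2 with hlt | hge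
  · have hm1 : m = 1 := by omega
    subst hm1
    refine ⟨{DA 1 ∅, DA 1 univ}, min_basis_Basis1, ?_⟩
    have hA : A = ∅ ∨ A = univ := by
      rcases A.eq_empty_or_nonempty with h | h
      · exact Or.inl h
      · refine Or.inr (Finset.eq_univ_iff_forall.mpr fun x => ?_)
        obtain ⟨y, hy⟩ := h
        rwa [Subsingleton.elim x y]
    rcases hA with rfl | rfl
    · exact Finset.mem_insert_self _ _
    · exact Finset.mem_insert_of_mem (Finset.mem_singleton_self _)
  · exact ⟨Basis2 m A, min_basis_Basis2 hge A, Finset.mem_insert_self _ _⟩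

end K2m

/-- `K_{2,m}` (`m ≥ 1`) with unit edge weights has at least `2 ^ m` distinct
relevant cutsets; in particular the number of relevant cutsets can grow exponentially in the
number of vertices. -/
theorem K2m_relevant_count (m : ℕ) (hm : 1 ≤ m) :
    2 ^ m ≤
      (Finset.univ.filter fun D : Finset (Sym2 (Fin 2 ⊕ Fin m)) =>
        IsRelevant (completeBipartiteGraph (Fin 2) (Fin m)) (fun _ => (1 : ℝ)) D).card := by
  have himg : (Finset.univ : Finset (Finset (Fin m))).image (K2m.DA m) ⊆
      Finset.univ.filter fun D : Finset (Sym2 (Fin 2 ⊕ Fin m)) =>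
        IsRelevant (completeBipartiteGraph (Fin 2) (Fin m)) (fun _ => (1 : ℝ)) D := by
    intro D hD
    obtain ⟨A, _, rfl⟩ := Finset.mem_image.mp hD
    exact Finset.mem_filter.mpr ⟨Finset.mem_univ _, K2m.relevant_DA hm A⟩
  have hle := Finset.card_le_card himg
  rwa [Finset.card_image_of_injective _ K2m.DA_inj, Finset.card_univ, Fintype.card_finset,
    Fintype.card_fin] at hle
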